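/- Let μ and ν be Borel probability measures on M with φ-barycenters x and y respectively, and let W₁(μ,ν) denote the supremum of |∫ f dμ − ∫ f dν| over all 1-Lipschitz functions f : M → ℝ. Then |W₁(μ,ν) − dist(x,y)| ≤ 2β·(√(η(μ)) + √(η(ν))). (This is Proposition 'statesarepoints' with the uniform constant made explicit: the Kantorovich–Rubinstein distance between localized states is close to the geodesic distance between their barycenters, up to an error controlled by the square roots of the dispersions.) -/

import Mathlib

open MeasureTheory

/-- Cauchy–Schwarz / Jensen: first moment bounded by square root of second moment. -/
lemma aux_first_moment {M : Type*} [MetricSpace M] [CompactSpace M] [MeasurableSpace M]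
    [BorelSpace M] (μ : Measure M) [IsProbabilityMeasure μ] (g : M → ℝ)
    (hg : Continuous g) (hg0 : ∀ z, 0 ≤ g z) :
    ∫ z, g z ∂μ ≤ Real.sqrt (∫ z, g z ^ 2 ∂μ) := by
  have hmem : MemLp g 2 μ :=
    hg.memLp_of_hasCompactSupport (HasCompactSupport.of_compactSpace g)
  have hvar := ProbabilityTheory.variance_nonneg g μ
  rw [ProbabilityTheory.variance_eq_sub hmem] at hvar
  have h1 : (∫ z, g z ∂μ) ^ 2 ≤ ∫ z, g z ^ 2 ∂μ := by
    simp only [Pi.pow_apply] at hvar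
    linarith
  have h0 : 0 ≤ ∫ z, g z ∂μ := integral_nonneg hg0
  calc ∫ z, g z ∂μ = Real.sqrt ((∫ z, g z ∂μ) ^ 2) := (Real.sqrt_sq h0).symm
    _ ≤ Real.sqrt (∫ z, g z ^ 2 ∂μ) := Real.sqrt_le_sqrt h1

/-- If `x` is a φ-barycenter of `μ`, the mean distance from `x` is at most `2β√η(μ)`. -/
lemma aux_mean_dist {M : Type*} [MetricSpace M] [CompactSpace M] [MeasurableSpace M]
    [BorelSpace M] (μ : Measure M) [IsProbabilityMeasure μ]
    {n : ℕ} (φ : M → EuclideanSpace ℝ (Fin n)) (hφ : Continuous φ)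
    (β : ℝ) (hβ : 0 < β)
    (hco : ∀ x y : M, dist x y ≤ β * ‖φ x - φ y‖)
    (x : M) (hx : ∀ z : M, ‖φ x - ∫ w, φ w ∂μ‖ ≤ ‖φ z - ∫ w, φ w ∂μ‖) :
    ∫ z, dist x z ∂μ ≤ 2 * β * Real.sqrt (∫ z, ‖φ z - ∫ w, φ w ∂μ‖ ^ 2 ∂μ) := by
  set b := ∫ w, φ w ∂μ with hb
  have hgc : Continuous fun z => ‖φ z - b‖ := (hφ.sub continuous_const).norm
  have hpw : ∀ z, dist x z ≤ 2 * β * ‖φ z - b‖ := by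
    intro z
    calc dist x z ≤ β * ‖φ x - φ z‖ := hco x z
      _ ≤ β * (‖φ x - b‖ + ‖φ z - b‖) := by
          gcongr
          calc ‖φ x - φ z‖ = ‖(φ x - b) - (φ z - b)‖ := by congr 1; abel
            _ ≤ ‖φ x - b‖ + ‖φ z - b‖ := norm_sub_le _ _
      _ ≤ β * (‖φ z - b‖ + ‖φ z - b‖) := by gcongr; exact hx z
      _ = 2 * β * ‖φ z - b‖ := by ring
  have hint1 : Integrable (fun z => dist x z) μ :=
    (continuous_const.dist continuous_id).integrable_of_hasCompactSupport
      (HasCompactSupport.of_compactSpace _)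
  have hint2 : Integrable (fun z => 2 * β * ‖φ z - b‖) μ :=
    ((continuous_const.mul hgc)).integrable_of_hasCompactSupport
      (HasCompactSupport.of_compactSpace _)
  calc ∫ z, dist x z ∂μ ≤ ∫ z, 2 * β * ‖φ z - b‖ ∂μ :=
        integral_mono hint1 hint2 hpw
    _ = 2 * β * ∫ z, ‖φ z - b‖ ∂μ := integral_const_mul _ _
    _ ≤ 2 * β * Real.sqrt (∫ z, ‖φ z - b‖ ^ 2 ∂μ) := by
        gcongr
        exact aux_first_moment μ _ hgc (fun z => norm_nonneg _)

/-- For a 1-Lipschitz `f`, `|∫ f dμ - f x|` is controlled by the mean distance to `x`. -/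
lemma aux_lip_bound {M : Type*} [MetricSpace M] [CompactSpace M] [MeasurableSpace M]
    [BorelSpace M] (μ : Measure M) [IsProbabilityMeasure μ]
    (f : M → ℝ) (hf : LipschitzWith 1 f) (x : M) :
    |(∫ z, f z ∂μ) - f x| ≤ ∫ z, dist x z ∂μ := by
  have hintf : Integrable f μ :=
    hf.continuous.integrable_of_hasCompactSupport (HasCompactSupport.of_compactSpace _)
  have hintd : Integrable (fun z => dist x z) μ :=
    (continuous_const.dist continuous_id).integrable_of_hasCompactSupport
      (HasCompactSupport.of_compactSpace _)
  have h1 : (∫ z, f z ∂μ) - f x = ∫ z, (f z - f x) ∂μ := by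
    rw [integral_sub hintf (integrable_const _), integral_const]
    simp
  rw [h1]
  calc |∫ z, (f z - f x) ∂μ| ≤ ∫ z, |f z - f x| ∂μ := by
        simpa [Real.norm_eq_abs] using
          norm_integral_le_integral_norm (μ := μ) (fun z => f z - f x)
    _ ≤ ∫ z, dist x z ∂μ := by
        apply integral_mono (hintf.sub (integrable_const _)).abs hintd
        intro z
        have := hf.dist_le_mul z x
        simp only [NNReal.coe_one, one_mul] at this
        calc |f z - f x| = dist (f z) (f x) := (Real.dist_eq _ _).symm
          _ ≤ dist z x := this
          _ = dist x z := dist_comm _ _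

/-- Proposition `statesarepoints` with explicit constant: the Kantorovich–Rubinstein
distance (in dual form) between two localized states differs from the distance
between their φ-barycenters by at most `2β(√η(μ) + √η(ν))`. -/
theorem states_are_points
    {M : Type*} [MetricSpace M] [CompactSpace M] [MeasurableSpace M] [BorelSpace M]
    (μ ν : Measure M) [IsProbabilityMeasure μ] [IsProbabilityMeasure ν]
    (n : ℕ) (hn : 1 ≤ n) (φ : M → EuclideanSpace ℝ (Fin n)) (hφ : Continuous φ)
    (β : ℝ) (hβ : 0 < β)
    (hco : ∀ x y : M, dist x y ≤ β * ‖φ x - φ y‖)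
    (x y : M)
    (hx : ∀ z : M, ‖φ x - ∫ w, φ w ∂μ‖ ≤ ‖φ z - ∫ w, φ w ∂μ‖)
    (hy : ∀ z : M, ‖φ y - ∫ w, φ w ∂ν‖ ≤ ‖φ z - ∫ w, φ w ∂ν‖) :
    |sSup {r : ℝ | ∃ f : M → ℝ, LipschitzWith 1 f ∧ r = |(∫ z, f z ∂μ) - ∫ z, f z ∂ν|}
        - dist x y| ≤
      2 * β * (Real.sqrt (∫ z, ‖φ z - ∫ w, φ w ∂μ‖ ^ 2 ∂μ)
        + Real.sqrt (∫ z, ‖φ z - ∫ w, φ w ∂ν‖ ^ 2 ∂ν)) := by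
  set Eμ := 2 * β * Real.sqrt (∫ z, ‖φ z - ∫ w, φ w ∂μ‖ ^ 2 ∂μ) with hEμ
  set Eν := 2 * β * Real.sqrt (∫ z, ‖φ z - ∫ w, φ w ∂ν‖ ^ 2 ∂ν) with hEν
  have hdμ : ∫ z, dist x z ∂μ ≤ Eμ := aux_mean_dist μ φ hφ β hβ hco x hx
  have hdν : ∫ z, dist y z ∂ν ≤ Eν := aux_mean_dist ν φ hφ β hβ hco y hy
  set S := {r : ℝ | ∃ f : M → ℝ, LipschitzWith 1 f ∧ r = |(∫ z, f z ∂μ) - ∫ z, f z ∂ν|}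
    with hS
  -- every element of S is at most dist x y + Eμ + Eν
  have hub : ∀ r ∈ S, r ≤ dist x y + (Eμ + Eν) := by
    rintro r ⟨f, hf, rfl⟩
    have h1 : |(∫ z, f z ∂μ) - f x| ≤ Eμ := (aux_lip_bound μ f hf x).trans hdμ
    have h2 : |(∫ z, f z ∂ν) - f y| ≤ Eν := (aux_lip_bound ν f hf y).trans hdν
    have h3 : |f x - f y| ≤ dist x y := by
      have := hf.dist_le_mul x y
      simpa [Real.dist_eq] using this
    calc |(∫ z, f z ∂μ) - ∫ z, f z ∂ν|
        = |((∫ z, f z ∂μ) - f x) + (f x - f y) + (f y - ∫ z, f z ∂ν)| := by ring_nf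
      _ ≤ |((∫ z, f z ∂μ) - f x) + (f x - f y)| + |f y - ∫ z, f z ∂ν| := abs_add_le _ _
      _ ≤ (|(∫ z, f z ∂μ) - f x| + |f x - f y|) + |f y - ∫ z, f z ∂ν| := by
          gcongr; exact abs_add_le _ _
      _ ≤ (Eμ + dist x y) + Eν := by
          have h2' : |f y - ∫ z, f z ∂ν| ≤ Eν := by rwa [abs_sub_comm]
          gcongr
      _ = dist x y + (Eμ + Eν) := by ring
  have hbdd : BddAbove S := ⟨dist x y + (Eμ + Eν), hub⟩
  have hne : S.Nonempty := by
    refine ⟨0, fun _ => 0, (LipschitzWith.const 0).weaken (by norm_num), by simp⟩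
  rw [abs_le]
  constructor
  · -- lower bound via f = dist(·, y)
    have hfy : LipschitzWith 1 (fun z => dist z y) := LipschitzWith.dist_left y
    have hmem : |(∫ z, dist z y ∂μ) - ∫ z, dist z y ∂ν| ∈ S := ⟨_, hfy, rfl⟩
    have hle := le_csSup hbdd hmem
    have hμlow : dist x y - Eμ ≤ ∫ z, dist z y ∂μ := by
      have h1 : |(∫ z, dist z y ∂μ) - dist x y| ≤ Eμ := by
        have := (aux_lip_bound μ (fun z => dist z y) hfy x).trans hdμ
        simpa using this
      have := (abs_le.mp h1).1
      linarith
    have hνhigh : ∫ z, dist z y ∂ν ≤ Eν := by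
      have h2 : |(∫ z, dist z y ∂ν) - dist y y| ≤ Eν := by
        have := (aux_lip_bound ν (fun z => dist z y) hfy y).trans hdν
        simpa using this
      have := (abs_le.mp h2).2
      simp only [dist_self] at this
      linarith
    have hE : dist x y - (Eμ + Eν) ≤ (∫ z, dist z y ∂μ) - ∫ z, dist z y ∂ν := by
      linarith
    have hE2 : (∫ z, dist z y ∂μ) - ∫ z, dist z y ∂ν
        ≤ |(∫ z, dist z y ∂μ) - ∫ z, dist z y ∂ν| := le_abs_self _
    have key : dist x y - (Eμ + Eν) ≤ sSup S := le_trans (hE.trans hE2) hle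
    have : Eμ + Eν = 2 * β * (Real.sqrt (∫ z, ‖φ z - ∫ w, φ w ∂μ‖ ^ 2 ∂μ)
        + Real.sqrt (∫ z, ‖φ z - ∫ w, φ w ∂ν‖ ^ 2 ∂ν)) := by rw [hEμ, hEν]; ring
    linarith [key, this ▸ le_refl (Eμ + Eν)]
  · have hsup : sSup S ≤ dist x y + (Eμ + Eν) := csSup_le hne hub
    have : Eμ + Eν = 2 * β * (Real.sqrt (∫ z, ‖φ z - ∫ w, φ w ∂μ‖ ^ 2 ∂μ)
        + Real.sqrt (∫ z, ‖φ z - ∫ w, φ w ∂ν‖ ^ 2 ∂ν)) := by rw [hEμ, hEν]; ring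
    linarith
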